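/- Let G be a group with finite symmetric generating set S, 1 < p < ∞ with conjugate exponent q. If α lies in the closure in D^p(G)/ℂ of the finitely supported functions (with respect to the seminorm ‖α‖_{D(p)} = (Σ_{g∈S} ‖α∗(g-1)‖_p^p)^{1/p}), and β ∈ D^q(G) is harmonic, then ⟨α, β⟩ = 0, where ⟨α, β⟩ = Σ_{x∈G} Σ_{g∈S} (α(x g⁻¹) - α(x)) conj(β(x g⁻¹) - β(x)). -/

import Mathlib

open scoped BigOperators ComplexConjugate

private lemma summable_finsupp_mul {G : Type*} (φ c : G → ℂ)
    (hφ : (Function.support φ).Finite) : Summable (fun x => φ x * c x) := by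
  apply summable_of_ne_finset_zero (s := hφ.toFinset)
  intro x hx
  have h0 : φ x = 0 := by
    by_contra h
    exact hx (hφ.mem_toFinset.mpr h)
  rw [h0, zero_mul]

private lemma summable_finsupp_shift_mul {G : Type*} [Group G] (g : G) (φ c : G → ℂ)
    (hφ : (Function.support φ).Finite) : Summable (fun x => φ (x * g⁻¹) * c x) := by
  classical
  apply summable_of_ne_finset_zero (s := hφ.toFinset.image (fun y => y * g))
  intro x hx
  have h0 : φ (x * g⁻¹) = 0 := by
    by_contra h
    exact hx (Finset.mem_image.mpr ⟨x * g⁻¹, hφ.mem_toFinset.mpr h, by simp⟩)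
  rw [h0, zero_mul]

private lemma summable_finsupp_diff_mul {G : Type*} [Group G] (g : G) (φ c : G → ℂ)
    (hφ : (Function.support φ).Finite) :
    Summable (fun x => (φ (x * g⁻¹) - φ x) * c x) := by
  have := ((summable_finsupp_shift_mul g φ c hφ).sub (summable_finsupp_mul φ c hφ))
  simpa [sub_mul] using this

private lemma holder_pair {G : Type*} {p q : ℝ} (hpq : p.HolderConjugate q)
    (a b : G → ℂ) (ha : Summable fun x => ‖a x‖ ^ p) (hb : Summable fun x => ‖b x‖ ^ q) :
    Summable (fun x => a x * conj (b x)) ∧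
      ‖∑' x, a x * conj (b x)‖ ≤
        (∑' x, ‖a x‖ ^ p) ^ (1 / p) * (∑' x, ‖b x‖ ^ q) ^ (1 / q) := by
  obtain ⟨hs, hle⟩ := Real.summable_and_inner_le_Lp_mul_Lq_tsum_of_nonneg hpq
    (fun x => norm_nonneg (a x)) (fun x => norm_nonneg (b x)) ha hb
  have hnorm : ∀ x : G, ‖a x * conj (b x)‖ = ‖a x‖ * ‖b x‖ := fun x => by
    rw [norm_mul, RCLike.norm_conj]
  have hs2 : Summable fun x => ‖a x * conj (b x)‖ := by simpa only [hnorm] using hs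
  refine ⟨hs2.of_norm, le_trans (norm_tsum_le_tsum_norm hs2) ?_⟩
  calc ∑' x, ‖a x * conj (b x)‖ = ∑' x, ‖a x‖ * ‖b x‖ := by simp only [hnorm]
    _ ≤ _ := hle

private lemma pairing_finsupp_zero {G : Type*} [Group G] (S : Finset G)
    (hsym : ∀ g ∈ S, g⁻¹ ∈ S) (φ β : G → ℂ) (hφ : (Function.support φ).Finite)
    (hharm : ∀ x : G, ∑ g ∈ S, (β (x * g⁻¹) - β x) = 0) :
    ∑ g ∈ S, ∑' x : G, (φ (x * g⁻¹) - φ x) * conj (β (x * g⁻¹) - β x) = 0 := by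
  have hmem : ∀ g : G, g ∈ S ↔ g⁻¹ ∈ S := fun g =>
    ⟨hsym g, fun h => by simpa using hsym _ h⟩
  -- split each tsum
  have hsplit : ∀ g ∈ S,
      ∑' x : G, (φ (x * g⁻¹) - φ x) * conj (β (x * g⁻¹) - β x)
        = (∑' x : G, φ x * conj (β x - β (x * g))) -
          ∑' x : G, φ x * conj (β (x * g⁻¹) - β x) := by
    intro g _
    have h1 : Summable (fun x : G => φ (x * g⁻¹) * conj (β (x * g⁻¹) - β x)) :=
      summable_finsupp_shift_mul g φ _ hφ
    have h2 : Summable (fun x : G => φ x * conj (β (x * g⁻¹) - β x)) :=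
      summable_finsupp_mul φ _ hφ
    have e1 : ∑' x : G, φ (x * g⁻¹) * conj (β (x * g⁻¹) - β x)
        = ∑' x : G, φ x * conj (β x - β (x * g)) := by
      rw [← Equiv.tsum_eq (Equiv.mulRight g)
        (fun x : G => φ (x * g⁻¹) * conj (β (x * g⁻¹) - β x))]
      simp [Equiv.mulRight]
    rw [← e1, ← h1.tsum_sub h2]
    congr 1
    ext x
    ring
  rw [Finset.sum_congr rfl hsplit, Finset.sum_sub_distrib]
  have hA : ∑ g ∈ S, ∑' x : G, φ x * conj (β x - β (x * g)) = 0 := by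
    rw [← Summable.tsum_finsetSum (fun g _ => summable_finsupp_mul φ _ hφ)]
    have : ∀ x : G, ∑ g ∈ S, φ x * conj (β x - β (x * g)) = 0 := by
      intro x
      rw [← Finset.mul_sum, ← map_sum]
      have : ∑ g ∈ S, (β x - β (x * g)) = 0 := by
        have hre : ∑ g ∈ S, (β x - β (x * g)) = ∑ g ∈ S, (β x - β (x * g⁻¹)) :=
          Finset.sum_equiv (Equiv.inv G) (fun g => by simpa using hmem g)
            (fun g hg => by simp)
        rw [hre]
        have := hharm x
        have : ∑ g ∈ S, (β x - β (x * g⁻¹)) = - ∑ g ∈ S, (β (x * g⁻¹) - β x) := by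
          rw [← Finset.sum_neg_distrib]
          exact Finset.sum_congr rfl (fun g _ => by ring)
        rw [this, hharm x, neg_zero]
      rw [this, map_zero, mul_zero]
    rw [tsum_congr this, tsum_zero]
  have hB : ∑ g ∈ S, ∑' x : G, φ x * conj (β (x * g⁻¹) - β x) = 0 := by
    rw [← Summable.tsum_finsetSum (fun g _ => summable_finsupp_mul φ _ hφ)]
    have : ∀ x : G, ∑ g ∈ S, φ x * conj (β (x * g⁻¹) - β x) = 0 := by
      intro x
      rw [← Finset.mul_sum, ← map_sum, hharm x, map_zero, mul_zero]
    rw [tsum_congr this, tsum_zero]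
  rw [hA, hB, sub_zero]


/-- If `α` lies in the `D(p)`-closure of the finitely supported functions and
`β ∈ D^q(G)` is harmonic, then the pairing `⟨α, β⟩` vanishes. -/
theorem pairing_vanishes_on_closure {G : Type*} [Group G] (S : Finset G)
    (hsym : ∀ g ∈ S, g⁻¹ ∈ S) (hgen : Subgroup.closure (S : Set G) = ⊤)
    (p q : ℝ) (hp : 1 < p) (hpq : 1 / p + 1 / q = 1)
    (α β : G → ℂ)
    (hα : ∀ g ∈ S, Summable (fun x : G => ‖α (x * g⁻¹) - α x‖ ^ p))
    (hclos : ∀ ε : ℝ, 0 < ε → ∃ φ : G → ℂ, (Function.support φ).Finite ∧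
      (∑ g ∈ S, ∑' x : G,
        ‖(α (x * g⁻¹) - φ (x * g⁻¹)) - (α x - φ x)‖ ^ p) ^ (1 / p) < ε)
    (hβ : ∀ g ∈ S, Summable (fun x : G => ‖β (x * g⁻¹) - β x‖ ^ q))
    (hharm : ∀ x : G, ∑ g ∈ S, (β (x * g⁻¹) - β x) = 0) :
    ∑ g ∈ S, ∑' x : G, (α (x * g⁻¹) - α x) * conj (β (x * g⁻¹) - β x) = 0 := by
  classical
  have hPQ : p.HolderConjugate q := Real.holderConjugate_iff.mpr ⟨hp, by simpa [one_div] using hpq⟩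
  have hp0 : 0 < p := hPQ.pos
  have hq0 : 0 < q := hPQ.symm.pos
  set P := ∑ g ∈ S, ∑' x : G, (α (x * g⁻¹) - α x) * conj (β (x * g⁻¹) - β x) with hPdef
  set B := ∑ g ∈ S, (∑' x : G, ‖β (x * g⁻¹) - β x‖ ^ q) ^ (1 / q) with hBdef
  have hB0 : 0 ≤ B :=
    Finset.sum_nonneg fun g _ => Real.rpow_nonneg
      (tsum_nonneg fun x => Real.rpow_nonneg (norm_nonneg _) _) _
  have key : ∀ ε : ℝ, 0 < ε → ‖P‖ ≤ ε := by
    intro ε hε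
    obtain ⟨φ, hφfin, hφ⟩ := hclos (ε / (B + 1)) (by positivity)
    -- summability of the `p`-norms of the differences of `ψ = α - φ`
    have hψsum : ∀ g ∈ S, Summable (fun x : G =>
        ‖(α (x * g⁻¹) - φ (x * g⁻¹)) - (α x - φ x)‖ ^ p) := by
      intro g hg
      have h2 : Summable (fun x : G =>
          ‖(α (x * g⁻¹) - φ (x * g⁻¹)) - (α x - φ x)‖ ^ p - ‖α (x * g⁻¹) - α x‖ ^ p) := by
        apply summable_of_ne_finset_zero
          (s := hφfin.toFinset ∪ hφfin.toFinset.image (fun y => y * g))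
        intro x hx
        rw [Finset.mem_union] at hx
        push_neg at hx
        have hx1 : φ x = 0 := by
          by_contra h
          exact hx.1 (hφfin.mem_toFinset.mpr h)
        have hx2 : φ (x * g⁻¹) = 0 := by
          by_contra h
          exact hx.2 (Finset.mem_image.mpr ⟨x * g⁻¹, hφfin.mem_toFinset.mpr h, by simp⟩)
        rw [hx1, hx2, sub_zero, sub_zero, sub_self]
      exact ((hα g hg).add h2).congr (fun x => by ring)
    -- summability of the two pieces of the pairing
    have hSummψ : ∀ g ∈ S, Summable (fun x : G =>
        ((α (x * g⁻¹) - φ (x * g⁻¹)) - (α x - φ x)) * conj (β (x * g⁻¹) - β x)) :=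
      fun g hg => (holder_pair hPQ _ _ (hψsum g hg) (hβ g hg)).1
    have hSummφ : ∀ g ∈ S, Summable (fun x : G =>
        (φ (x * g⁻¹) - φ x) * conj (β (x * g⁻¹) - β x)) :=
      fun g _ => summable_finsupp_diff_mul g φ _ hφfin
    -- split the pairing
    have hPsplit : P = ∑ g ∈ S, ∑' x : G,
        ((α (x * g⁻¹) - φ (x * g⁻¹)) - (α x - φ x)) * conj (β (x * g⁻¹) - β x) := by
      have : P = (∑ g ∈ S, ∑' x : G,
          ((α (x * g⁻¹) - φ (x * g⁻¹)) - (α x - φ x)) * conj (β (x * g⁻¹) - β x))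
          + ∑ g ∈ S, ∑' x : G, (φ (x * g⁻¹) - φ x) * conj (β (x * g⁻¹) - β x) := by
        rw [hPdef, ← Finset.sum_add_distrib]
        refine Finset.sum_congr rfl fun g hg => ?_
        rw [← Summable.tsum_add (hSummψ g hg) (hSummφ g hg)]
        exact tsum_congr fun x => by ring
      rwa [pairing_finsupp_zero S hsym φ β hφfin hharm, add_zero] at this
    -- estimate
    have hbound : ∀ g ∈ S,
        ‖∑' x : G, ((α (x * g⁻¹) - φ (x * g⁻¹)) - (α x - φ x)) * conj (β (x * g⁻¹) - β x)‖
          ≤ (ε / (B + 1)) * (∑' x : G, ‖β (x * g⁻¹) - β x‖ ^ q) ^ (1 / q) := by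
      intro g hg
      have h1 := (holder_pair hPQ _ _ (hψsum g hg) (hβ g hg)).2
      refine le_trans h1 (mul_le_mul_of_nonneg_right ?_
        (Real.rpow_nonneg (tsum_nonneg fun x => Real.rpow_nonneg (norm_nonneg _) _) _))
      have hle : (∑' x : G, ‖(α (x * g⁻¹) - φ (x * g⁻¹)) - (α x - φ x)‖ ^ p)
          ≤ ∑ g' ∈ S, ∑' x : G, ‖(α (x * g'⁻¹) - φ (x * g'⁻¹)) - (α x - φ x)‖ ^ p :=
        Finset.single_le_sum (f := fun g' => ∑' x : G,
          ‖(α (x * g'⁻¹) - φ (x * g'⁻¹)) - (α x - φ x)‖ ^ p)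
          (fun g' _ => tsum_nonneg fun x => Real.rpow_nonneg (norm_nonneg _) _) hg
      calc (∑' x : G, ‖(α (x * g⁻¹) - φ (x * g⁻¹)) - (α x - φ x)‖ ^ p) ^ (1 / p)
          ≤ (∑ g' ∈ S, ∑' x : G,
              ‖(α (x * g'⁻¹) - φ (x * g'⁻¹)) - (α x - φ x)‖ ^ p) ^ (1 / p) :=
            Real.rpow_le_rpow (tsum_nonneg fun x => Real.rpow_nonneg (norm_nonneg _) _)
              hle (by positivity)
        _ ≤ ε / (B + 1) := le_of_lt hφ
    calc ‖P‖ ≤ ∑ g ∈ S,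
          ‖∑' x : G, ((α (x * g⁻¹) - φ (x * g⁻¹)) - (α x - φ x)) * conj (β (x * g⁻¹) - β x)‖ := by
          rw [hPsplit]; exact norm_sum_le _ _
      _ ≤ ∑ g ∈ S, (ε / (B + 1)) * (∑' x : G, ‖β (x * g⁻¹) - β x‖ ^ q) ^ (1 / q) :=
          Finset.sum_le_sum hbound
      _ = (ε / (B + 1)) * B := by rw [hBdef, Finset.mul_sum]
      _ ≤ ε := by
          rw [div_mul_eq_mul_div, div_le_iff₀ (by positivity)]
          nlinarith
  have hPnorm : ‖P‖ = 0 := by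
    by_contra h
    have h0 : 0 < ‖P‖ := (norm_nonneg _).lt_of_ne (Ne.symm h)
    linarith [key (‖P‖ / 2) (by linarith)]
  exact norm_eq_zero.mp hPnorm
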